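/- For every x=(x₂,x₃)∈ℝ² with x₂² ≠ x₃² and x₃ ≠ 0 one has (DB')(x) = A'(x) and (DA')(x) = B'(x). (These two scalar identities express that the singular form ψ̃'₀,₁(x) is closed on D_W outside its singularity, paper Lemma 5.9.) -/

import Mathlib

open MeasureTheory

/-- The `e₃`-component `B'` of the singular function `ψ̃'₀,₁` on the Minkowski plane. -/
noncomputable def B' (x : ℝ × ℝ) : ℝ :=
  if x.1 ^ 2 - x.2 ^ 2 > 0 then
    (1/2) * min |x.1 - x.2| |x.1 + x.2| * Real.exp (-(Real.pi * (x.1 ^ 2 - x.2 ^ 2)))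
  else 0

/-- The `e₂`-component `A'` of the singular function `ψ̃'₀,₁`. -/
noncomputable def A' (x : ℝ × ℝ) : ℝ := - Real.sign (x.1 * x.2) * B' x

lemma minabs {u v : ℝ} (h : |v| < |u|) : min |u - v| |u + v| = |u| - |v| := by
  obtain ⟨h1a, h1b⟩ | ⟨h1a, h1b⟩ := abs_cases u <;>
  obtain ⟨h2a, h2b⟩ | ⟨h2a, h2b⟩ := abs_cases v <;>
  obtain ⟨h3a, h3b⟩ | ⟨h3a, h3b⟩ := abs_cases (u - v) <;>
  obtain ⟨h4a, h4b⟩ | ⟨h4a, h4b⟩ := abs_cases (u + v) <;>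
  rw [min_def] <;> split <;> linarith

lemma sign_mul' (u v : ℝ) : Real.sign (u * v) = Real.sign u * Real.sign v := by
  rcases lt_trichotomy u 0 with hu | hu | hu <;> rcases lt_trichotomy v 0 with hv | hv | hv <;>
    simp [hu, hv, Real.sign_of_pos, Real.sign_of_neg, Real.sign_zero,
      mul_pos, mul_neg_of_pos_of_neg, mul_neg_of_neg_of_pos, mul_pos_of_neg_of_neg]

lemma Bval (u v : ℝ) (h : |v| < |u|) :
    B' (u, v) = (1/2) * (Real.sign u * u - Real.sign v * v) *
      Real.exp (-(Real.pi * (u ^ 2 - v ^ 2))) := by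
  have hq : u ^ 2 - v ^ 2 > 0 := by nlinarith [abs_nonneg v, sq_abs u, sq_abs v]
  have hmin : min |u - v| |u + v| = |u| - |v| := minabs h
  rw [B']
  simp only [if_pos hq]
  rw [hmin]
  rcases lt_trichotomy u 0 with hu | hu | hu <;> rcases lt_trichotomy v 0 with hv | hv | hv <;>
    simp [hu, hv, Real.sign_of_pos, Real.sign_of_neg, Real.sign_zero,
      abs_of_pos, abs_of_neg]

lemma ev_sign {x : ℝ} (hx : x ≠ 0) : ∀ᶠ t in nhds x, Real.sign t = Real.sign x := by
  rcases hx.lt_or_gt with h | h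
  · filter_upwards [eventually_lt_nhds h] with t ht
    rw [Real.sign_of_neg ht, Real.sign_of_neg h]
  · filter_upwards [eventually_gt_nhds h] with t ht
    rw [Real.sign_of_pos ht, Real.sign_of_pos h]

lemma hd1 (a c s w : ℝ) :
    HasDerivAt (fun t : ℝ => (1/2) * (a * t - c) * Real.exp (-(Real.pi * (t ^ 2 - s))))
      ((1/2) * a * Real.exp (-(Real.pi * (w ^ 2 - s))) +
        (1/2) * (a * w - c) * (Real.exp (-(Real.pi * (w ^ 2 - s))) * (-(Real.pi * (2 * w))))) w := by
  have h1 : HasDerivAt (fun t : ℝ => -(Real.pi * (t ^ 2 - s))) (-(Real.pi * (2 * w))) w := by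
    have := (((hasDerivAt_pow 2 w).sub_const s).const_mul Real.pi).neg
    simpa [mul_comm, Pi.neg_def] using this
  have h2 := h1.exp
  have h3 : HasDerivAt (fun t : ℝ => (1/2) * (a * t - c)) ((1/2) * a) w := by
    simpa using (((hasDerivAt_id w).const_mul a).sub_const c).const_mul (1/2 : ℝ)
  simpa [Pi.mul_def] using h3.mul h2

lemma hd2 (b c s w : ℝ) :
    HasDerivAt (fun t : ℝ => (1/2) * (c - b * t) * Real.exp (-(Real.pi * (s - t ^ 2))))
      ((1/2) * (-b) * Real.exp (-(Real.pi * (s - w ^ 2))) +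
        (1/2) * (c - b * w) * (Real.exp (-(Real.pi * (s - w ^ 2))) * (Real.pi * (2 * w)))) w := by
  have h1 : HasDerivAt (fun t : ℝ => -(Real.pi * (s - t ^ 2))) (Real.pi * (2 * w)) w := by
    have := ((((hasDerivAt_pow 2 w).const_sub s)).const_mul Real.pi).neg
    refine this.congr_deriv ?_
    ring
  have h2 := h1.exp
  have h3 : HasDerivAt (fun t : ℝ => (1/2) * (c - b * t)) ((1/2) * (-b)) w := by
    have := (((hasDerivAt_id w).const_mul b).const_sub c).const_mul (1/2 : ℝ)
    simpa using this
  simpa [Pi.mul_def] using h3.mul h2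

lemma master (a b x₂ x₃ : ℝ) (ha : a * a = 1) (hb : b * b = 1)
    (h₂ : ∀ᶠ t in nhds x₂, B' (t, x₃) =
        (1/2) * (a * t - b * x₃) * Real.exp (-(Real.pi * (t ^ 2 - x₃ ^ 2))) ∧
        Real.sign (t * x₃) = a * b)
    (h₃ : ∀ᶠ t in nhds x₃, B' (x₂, t) =
        (1/2) * (a * x₂ - b * t) * Real.exp (-(Real.pi * (x₂ ^ 2 - t ^ 2))) ∧
        Real.sign (x₂ * t) = a * b) :
    (∃ d₂ d₃ : ℝ,
      HasDerivAt (fun t : ℝ => B' (t, x₃)) d₂ x₂ ∧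
      HasDerivAt (fun t : ℝ => B' (x₂, t)) d₃ x₃ ∧
      x₃ * d₂ + x₂ * d₃ = A' (x₂, x₃)) ∧
    (∃ d₂ d₃ : ℝ,
      HasDerivAt (fun t : ℝ => A' (t, x₃)) d₂ x₂ ∧
      HasDerivAt (fun t : ℝ => A' (x₂, t)) d₃ x₃ ∧
      x₃ * d₂ + x₂ * d₃ = B' (x₂, x₃)) := by
  set E := Real.exp (-(Real.pi * (x₂ ^ 2 - x₃ ^ 2))) with hE
  set D₂ := (1/2) * a * E + (1/2) * (a * x₂ - b * x₃) * (E * (-(Real.pi * (2 * x₂)))) with hD₂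
  set D₃ := (1/2) * (-b) * E + (1/2) * (a * x₂ - b * x₃) * (E * (Real.pi * (2 * x₃))) with hD₃
  have hBd : HasDerivAt (fun t : ℝ => B' (t, x₃)) D₂ x₂ :=
    (hd1 a (b * x₃) (x₃ ^ 2) x₂).congr_of_eventuallyEq (h₂.mono fun t ht => ht.1)
  have hBd' : HasDerivAt (fun t : ℝ => B' (x₂, t)) D₃ x₃ :=
    (hd2 b (a * x₂) (x₂ ^ 2) x₃).congr_of_eventuallyEq (h₃.mono fun t ht => ht.1)
  have hBv : B' (x₂, x₃) = (1/2) * (a * x₂ - b * x₃) * E := h₂.self_of_nhds.1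
  have hsv : Real.sign (x₂ * x₃) = a * b := h₂.self_of_nhds.2
  have hAv : A' (x₂, x₃) = -(a * b) * ((1/2) * (a * x₂ - b * x₃) * E) := by
    rw [A', hsv, hBv]
  have hAB₂ : ∀ᶠ t in nhds x₂, A' (t, x₃) = -(a * b) * B' (t, x₃) := by
    filter_upwards [h₂] with t ht
    rw [A', ht.2]
  have hAB₃ : ∀ᶠ t in nhds x₃, A' (x₂, t) = -(a * b) * B' (x₂, t) := by
    filter_upwards [h₃] with t ht
    rw [A', ht.2]
  have hAd : HasDerivAt (fun t : ℝ => A' (t, x₃)) (-(a * b) * D₂) x₂ :=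
    (hBd.const_mul (-(a * b))).congr_of_eventuallyEq hAB₂
  have hAd' : HasDerivAt (fun t : ℝ => A' (x₂, t)) (-(a * b) * D₃) x₃ :=
    (hBd'.const_mul (-(a * b))).congr_of_eventuallyEq hAB₃
  refine ⟨⟨D₂, D₃, hBd, hBd', ?_⟩, ⟨-(a * b) * D₂, -(a * b) * D₃, hAd, hAd', ?_⟩⟩
  · rw [hAv, hD₂, hD₃]
    linear_combination ((1/2) * E * b * x₂) * ha - ((1/2) * E * a * x₃) * hb
  · rw [hBv, hD₂, hD₃]
    linear_combination (-(1/2) * E * b * x₃) * ha + ((1/2) * E * a * x₂) * hb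

/-- Paper Lemma 5.9 (scalar components): for `x₂² ≠ x₃²` and `x₃ ≠ 0`,
`(DB')(x) = A'(x)` and `(DA')(x) = B'(x)`, where
`(Dg)(x) = x₃·∂g/∂x₂(x) + x₂·∂g/∂x₃(x)`. -/
theorem stmt7 (x₂ x₃ : ℝ) (hx : x₂ ^ 2 ≠ x₃ ^ 2) (hx3 : x₃ ≠ 0) :
    (∃ d₂ d₃ : ℝ,
      HasDerivAt (fun t : ℝ => B' (t, x₃)) d₂ x₂ ∧
      HasDerivAt (fun t : ℝ => B' (x₂, t)) d₃ x₃ ∧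
      x₃ * d₂ + x₂ * d₃ = A' (x₂, x₃)) ∧
    (∃ d₂ d₃ : ℝ,
      HasDerivAt (fun t : ℝ => A' (t, x₃)) d₂ x₂ ∧
      HasDerivAt (fun t : ℝ => A' (x₂, t)) d₃ x₃ ∧
      x₃ * d₂ + x₂ * d₃ = B' (x₂, x₃)) := by
  rcases hx.lt_or_gt with hlt | hgt
  · -- q < 0: everything vanishes near x
    have hev₂ : ∀ᶠ t in nhds x₂, B' (t, x₃) = 0 := by
      have hc : ContinuousAt (fun t : ℝ => t ^ 2) x₂ := by fun_prop
      filter_upwards [hc.eventually_lt continuousAt_const hlt] with t ht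
      rw [B']
      exact if_neg (by push_neg; simp only []; linarith)
    have hev₃ : ∀ᶠ t in nhds x₃, B' (x₂, t) = 0 := by
      have hc : ContinuousAt (fun t : ℝ => t ^ 2) x₃ := by fun_prop
      filter_upwards [continuousAt_const.eventually_lt hc hlt] with t ht
      rw [B']
      exact if_neg (by push_neg; simp only []; linarith)
    have hAev₂ : ∀ᶠ t in nhds x₂, A' (t, x₃) = 0 := by
      filter_upwards [hev₂] with t ht
      rw [A', ht]; ring
    have hAev₃ : ∀ᶠ t in nhds x₃, A' (x₂, t) = 0 := by
      filter_upwards [hev₃] with t ht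
      rw [A', ht]; ring
    have hB0 : B' (x₂, x₃) = 0 := hev₂.self_of_nhds
    have hA0 : A' (x₂, x₃) = 0 := hAev₂.self_of_nhds
    refine ⟨⟨0, 0, ?_, ?_, by rw [hA0]; ring⟩, ⟨0, 0, ?_, ?_, by rw [hB0]; ring⟩⟩
    · exact (hasDerivAt_const x₂ (0:ℝ)).congr_of_eventuallyEq hev₂
    · exact (hasDerivAt_const x₃ (0:ℝ)).congr_of_eventuallyEq hev₃
    · exact (hasDerivAt_const x₂ (0:ℝ)).congr_of_eventuallyEq hAev₂
    · exact (hasDerivAt_const x₃ (0:ℝ)).congr_of_eventuallyEq hAev₃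
  · -- q > 0
    have habs : |x₃| < |x₂| := by
      nlinarith [abs_nonneg x₂, abs_nonneg x₃, sq_abs x₂, sq_abs x₃]
    have hx2 : x₂ ≠ 0 := by
      intro h
      rw [h] at habs
      simp at habs
      nlinarith [abs_nonneg x₃]
    set a := Real.sign x₂ with haa
    set b := Real.sign x₃ with hbb
    have ha : a * a = 1 := by
      rcases hx2.lt_or_gt with h | h
      · rw [haa, Real.sign_of_neg h]; ring
      · rw [haa, Real.sign_of_pos h]; ring
    have hb : b * b = 1 := by
      rcases hx3.lt_or_gt with h | h
      · rw [hbb, Real.sign_of_neg h]; ring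
      · rw [hbb, Real.sign_of_pos h]; ring
    apply master a b x₂ x₃ ha hb
    · filter_upwards [ev_sign hx2,
        continuousAt_const.eventually_lt continuous_abs.continuousAt habs] with t h1 h2
      constructor
      · rw [Bval t x₃ h2, h1, ← hbb]
      · rw [sign_mul', h1, ← hbb]
    · filter_upwards [ev_sign hx3,
        continuous_abs.continuousAt.eventually_lt continuousAt_const habs] with t h1 h2
      constructor
      · rw [Bval x₂ t h2, h1, ← haa, ← hbb]
      · rw [sign_mul', h1, ← haa, ← hbb]
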